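/- Let s ∈ (0,1/2) and let f : ℝ → ℂ be measurable. Define V : ℝ → ℂ by V(t) := f(t) for t > 0, V(0) := 0, and V(t) := f(−t) for t < 0. Then [V]²_{s,ℝ} ≤ 4·[f]²_{s,(0,∞)} (as an inequality in [0,∞]). -/

import Mathlib

open MeasureTheory
open scoped ENNReal NNReal

/-- The squared Slobodeckij (Gagliardo) seminorm
`[g]²_{s,A} = ∫_A ∫_A |g(x) − g(y)|² / |x − y|^{1+2s} dx dy`, valued in `[0,∞]`. -/
noncomputable def slobSq (s : ℝ) (A : Set ℝ) (g : ℝ → ℂ) : ℝ≥0∞ :=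
  ∫⁻ x in A, ∫⁻ y in A,
    (‖g x - g y‖₊ : ℝ≥0∞) ^ 2 / ENNReal.ofReal (|x - y| ^ (1 + 2 * s))

private lemma neg_image_Ioi : (fun x : ℝ => -x) '' Set.Ioi 0 = Set.Iio 0 := by
  ext x
  simp only [Set.mem_image, Set.mem_Ioi, Set.mem_Iio]
  constructor
  · rintro ⟨y, hy, rfl⟩; linarith
  · intro hx; exact ⟨-x, by linarith, by ring⟩

private lemma neg_setLIntegral (g : ℝ → ℝ≥0∞) :
    ∫⁻ x in Set.Iio (0:ℝ), g x = ∫⁻ x in Set.Ioi (0:ℝ), g (-x) := by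
  have h := (Measure.measurePreserving_neg (volume : Measure ℝ)).setLIntegral_comp_emb
    (Homeomorph.neg ℝ).measurableEmbedding g (Set.Ioi 0)
  rw [h, show Neg.neg '' Set.Ioi (0:ℝ) = Set.Iio 0 from neg_image_Ioi]

theorem stmt_15 (s : ℝ) (hs : s ∈ Set.Ioo (0 : ℝ) (1/2)) (f : ℝ → ℂ) (hf : Measurable f) :
    slobSq s Set.univ (fun t => if 0 < t then f t else if t < 0 then f (-t) else 0) ≤
      4 * slobSq s (Set.Ioi 0) f := by
  obtain ⟨hs0, hs1⟩ := hs
  set p : ℝ := 1 + 2 * s with hp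
  have hp0 : (0:ℝ) < p := by positivity
  set V : ℝ → ℂ := fun t => if 0 < t then f t else if t < 0 then f (-t) else 0 with hV
  set G : ℝ → ℝ → ℝ≥0∞ := fun x y =>
    (‖V x - V y‖₊ : ℝ≥0∞) ^ 2 / ENNReal.ofReal (|x - y| ^ p) with hG
  set F : ℝ → ℝ → ℝ≥0∞ := fun x y =>
    (‖f x - f y‖₊ : ℝ≥0∞) ^ 2 / ENNReal.ofReal (|x - y| ^ p) with hF
  have hVm : Measurable V := by
    apply Measurable.ite measurableSet_Ioi hf
    exact Measurable.ite measurableSet_Iio (hf.comp measurable_neg) measurable_const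
  have hGmeas : Measurable (fun q : ℝ × ℝ => G q.1 q.2) := by
    apply Measurable.div
    · exact (((hVm.comp measurable_fst).sub
        (hVm.comp measurable_snd)).nnnorm.coe_nnreal_ennreal).pow_const 2
    · exact (((Real.continuous_rpow_const hp0.le).measurable.comp
        ((measurable_fst.sub measurable_snd).abs))).ennreal_ofReal
  have hmx : ∀ A : Set ℝ, Measurable fun x => ∫⁻ y in A, G x y :=
    fun A => hGmeas.lintegral_prod_right'
  have hVpos : ∀ x > (0:ℝ), V x = f x := fun x hx => by simp [hV, hx]
  have hVneg : ∀ x > (0:ℝ), V (-x) = f x := fun x hx => by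
    simp [hV, hx, not_lt_of_gt hx, show ¬ (0:ℝ) < -x by linarith, show -x < 0 by linarith]
  have hcross : ∀ x > (0:ℝ), ∀ y > (0:ℝ),
      (‖f x - f y‖₊ : ℝ≥0∞) ^ 2 / ENNReal.ofReal ((x + y) ^ p) ≤ F x y := by
    intro x hx y hy
    apply ENNReal.div_le_div le_rfl
    apply ENNReal.ofReal_le_ofReal
    apply Real.rpow_le_rpow (abs_nonneg _) _ hp0.le
    rw [abs_sub_le_iff]; constructor <;> linarith
  have hmes : MeasurableSet (Set.Ioi (0:ℝ)) := measurableSet_Ioi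
  have hU : (Set.Iio (0:ℝ) ∪ Set.Ioi 0 : Set ℝ) =ᵐ[volume] (Set.univ : Set ℝ) := by
    rw [Set.Iio_union_Ioi, MeasureTheory.ae_eq_univ]
    simp
  have hdisj : Disjoint (Set.Iio (0:ℝ)) (Set.Ioi 0) := by
    apply Set.disjoint_left.2
    intro x hx hx'
    exact absurd (Set.mem_Ioi.1 hx') (not_lt.2 (le_of_lt (Set.mem_Iio.1 hx)))
  have hsplit : ∀ g : ℝ → ℝ≥0∞,
      ∫⁻ x in (Set.Iio (0:ℝ) ∪ Set.Ioi 0), g x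
        = (∫⁻ x in Set.Iio (0:ℝ), g x) + ∫⁻ x in Set.Ioi (0:ℝ), g x :=
    fun g => lintegral_union hmes hdisj
  have houter : slobSq s Set.univ V
      = ∫⁻ x in (Set.Iio (0:ℝ) ∪ Set.Ioi 0), ∫⁻ y in (Set.Iio (0:ℝ) ∪ Set.Ioi 0), G x y := by
    unfold slobSq
    rw [setLIntegral_congr hU]
    exact lintegral_congr fun x => by rw [setLIntegral_congr hU]
  set J : ℝ≥0∞ := slobSq s (Set.Ioi 0) f with hJ
  have hJdef : J = ∫⁻ x in Set.Ioi (0:ℝ), ∫⁻ y in Set.Ioi (0:ℝ), F x y := rfl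
  have hinner_pp : ∀ x > (0:ℝ), ∫⁻ y in Set.Ioi (0:ℝ), G x y = ∫⁻ y in Set.Ioi (0:ℝ), F x y := by
    intro x hx
    apply setLIntegral_congr_fun hmes
    intro y hy
    simp only [Set.mem_Ioi] at hy
    simp only [hG, hF, hVpos x hx, hVpos y hy]
  have hinner_pm : ∀ x > (0:ℝ), ∫⁻ y in Set.Iio (0:ℝ), G x y ≤ ∫⁻ y in Set.Ioi (0:ℝ), F x y := by
    intro x hx
    rw [neg_setLIntegral]
    apply setLIntegral_mono' hmes
    intro y hy
    simp only [Set.mem_Ioi] at hy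
    have : G x (-y) = (‖f x - f y‖₊ : ℝ≥0∞) ^ 2 / ENNReal.ofReal (|x + y| ^ p) := by
      simp [hG, hVpos x hx, hVneg y hy, sub_neg_eq_add]
    rw [this, abs_of_pos (by linarith : (0:ℝ) < x + y)]
    exact hcross x hx y hy
  have hinner_mp : ∀ x > (0:ℝ), ∫⁻ y in Set.Ioi (0:ℝ), G (-x) y ≤ ∫⁻ y in Set.Ioi (0:ℝ), F x y := by
    intro x hx
    apply setLIntegral_mono' hmes
    intro y hy
    simp only [Set.mem_Ioi] at hy
    have habs : |(-x) - y| = |x + y| := by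
      rw [show (-x) - y = -(x + y) by ring, abs_neg]
    have : G (-x) y = (‖f x - f y‖₊ : ℝ≥0∞) ^ 2 / ENNReal.ofReal (|x + y| ^ p) := by
      simp only [hG, hVpos y hy, hVneg x hx, habs,
        show ‖f y - f x‖₊ = ‖f x - f y‖₊ by rw [show f y - f x = -(f x - f y) by ring, nnnorm_neg]]
    rw [this, abs_of_pos (by linarith : (0:ℝ) < x + y)]
    exact hcross x hx y hy
  have hinner_mm : ∀ x > (0:ℝ), ∫⁻ y in Set.Iio (0:ℝ), G (-x) y = ∫⁻ y in Set.Ioi (0:ℝ), F x y := by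
    intro x hx
    rw [neg_setLIntegral]
    apply setLIntegral_congr_fun hmes
    intro y hy
    simp only [Set.mem_Ioi] at hy
    have habs : |(-x) - (-y)| = |x - y| := by
      rw [show (-x) - (-y) = -(x - y) by ring, abs_neg]
    simp only [hG, hF, hVneg x hx, hVneg y hy, habs]
  have Ipp : ∫⁻ x in Set.Ioi (0:ℝ), ∫⁻ y in Set.Ioi (0:ℝ), G x y ≤ J := by
    rw [hJdef]
    apply le_of_eq
    apply setLIntegral_congr_fun hmes
    intro x hx
    exact hinner_pp x (Set.mem_Ioi.1 hx)
  have Ipm : ∫⁻ x in Set.Ioi (0:ℝ), ∫⁻ y in Set.Iio (0:ℝ), G x y ≤ J := by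
    rw [hJdef]
    exact setLIntegral_mono' hmes fun x hx => hinner_pm x (Set.mem_Ioi.1 hx)
  have Imp : ∫⁻ x in Set.Iio (0:ℝ), ∫⁻ y in Set.Ioi (0:ℝ), G x y ≤ J := by
    rw [hJdef, neg_setLIntegral]
    exact setLIntegral_mono' hmes fun x hx => hinner_mp x (Set.mem_Ioi.1 hx)
  have Imm : ∫⁻ x in Set.Iio (0:ℝ), ∫⁻ y in Set.Iio (0:ℝ), G x y ≤ J := by
    rw [hJdef, neg_setLIntegral]
    apply le_of_eq
    apply setLIntegral_congr_fun hmes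
    intro x hx
    exact hinner_mm x (Set.mem_Ioi.1 hx)
  calc slobSq s Set.univ V
      = (∫⁻ x in Set.Iio (0:ℝ), ((∫⁻ y in Set.Iio (0:ℝ), G x y) + ∫⁻ y in Set.Ioi (0:ℝ), G x y))
        + ∫⁻ x in Set.Ioi (0:ℝ), ((∫⁻ y in Set.Iio (0:ℝ), G x y) + ∫⁻ y in Set.Ioi (0:ℝ), G x y) := by
        rw [houter, hsplit]
        congr 1 <;> exact lintegral_congr fun x => hsplit _
    _ = ((∫⁻ x in Set.Iio (0:ℝ), ∫⁻ y in Set.Iio (0:ℝ), G x y)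
          + ∫⁻ x in Set.Iio (0:ℝ), ∫⁻ y in Set.Ioi (0:ℝ), G x y)
        + ((∫⁻ x in Set.Ioi (0:ℝ), ∫⁻ y in Set.Iio (0:ℝ), G x y)
          + ∫⁻ x in Set.Ioi (0:ℝ), ∫⁻ y in Set.Ioi (0:ℝ), G x y) := by
        congr 1 <;>
          exact lintegral_add_left' ((hmx (Set.Iio 0)).aemeasurable) _
    _ ≤ (J + J) + (J + J) := add_le_add (add_le_add Imm Imp) (add_le_add Ipm Ipp)
    _ = 4 * J := by ring
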